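/- (Proposition 5, combinatorial form.) Let z₂ ≥ 0, ℓ ∈ ℝ, and let T ⊆ V be a nonempty subset such that (i) deg_T(v) + z₂(c_v − θ) ≥ ℓ for every v ∈ T, and (ii) every nonempty subset S ⊆ V contains a node v with deg_S(v) + z₂(c_v − θ) ≤ ℓ. Then for every nonempty subset S ⊆ V with c(S) ≥ θ, d(T) ≥ d(S)/2 − (z₂/2)·(c(T) − θ); that is, d(T) ≥ OPT/2 − (z₂/2)·(c(T) − θ), where OPT is the maximum density over all nonempty feasible subsets. -/

import Mathlib

/-- The number of edges of `G` with both endpoints in `S`, divided by `|S|`. -/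
noncomputable def density {V : Type*} (G : SimpleGraph V) (S : Finset V) : ℝ :=
  ({e ∈ G.edgeSet | ∀ v ∈ e, v ∈ S} : Set (Sym2 V)).ncard / S.card

/-- The average agreement value over `S`. -/
noncomputable def agreement {V : Type*} (c : V → ℝ) (S : Finset V) : ℝ :=
  (∑ v ∈ S, c v) / S.card

/-- The degree of `v` in the subgraph of `G` induced by `S`. -/
noncomputable def degIn {V : Type*} (G : SimpleGraph V) (S : Finset V) (v : V) : ℕ :=
  ({u : V | u ∈ S ∧ G.Adj v u}).ncard

section aux
variable [DecidableEq V] (G : SimpleGraph V) [DecidableRel G.Adj]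

def edgeFin (S : Finset V) : Finset (Sym2 V) :=
  ((S ×ˢ S).filter fun p => G.Adj p.1 p.2).image (fun p => Sym2.mk p.1 p.2)

lemma mem_edgeFin {S : Finset V} {e : Sym2 V} :
    e ∈ edgeFin G S ↔ e ∈ G.edgeSet ∧ ∀ v ∈ e, v ∈ S := by
  simp only [edgeFin, Finset.mem_image, Finset.mem_filter, Finset.mem_product]
  constructor
  · rintro ⟨⟨a, b⟩, ⟨⟨ha, hb⟩, hadj⟩, rfl⟩
    refine ⟨hadj, ?_⟩
    intro v hv
    rcases Sym2.mem_iff.mp hv with rfl | rfl <;> assumption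
  · induction e using Sym2.ind with
  | _ a b =>
    rintro ⟨hadj, hmem⟩
    exact ⟨(a, b), ⟨⟨hmem a (Sym2.mem_mk_left a b), hmem b (Sym2.mem_mk_right a b)⟩,
      hadj⟩, rfl⟩

lemma degIn_eq (S : Finset V) (v : V) :
    degIn G S v = (S.filter (G.Adj v)).card := by
  rw [degIn, ← Set.ncard_coe_finset]
  congr 1
  ext u
  simp [and_comm]

lemma density_eq (S : Finset V) :
    density G S = (edgeFin G S).card / S.card := by
  have h : ({e ∈ G.edgeSet | ∀ v ∈ e, v ∈ S} : Set (Sym2 V)) = ↑(edgeFin G S) := by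
    ext e
    simp only [Set.mem_setOf_eq, Finset.coe_sort_coe, Finset.mem_coe, mem_edgeFin]
  rw [density, h, Set.ncard_coe_finset]
end aux

section aux2
variable [DecidableEq V] (G : SimpleGraph V) [DecidableRel G.Adj]

lemma edgeFin_card_erase {S : Finset V} {v : V} (hv : v ∈ S) :
    (edgeFin G S).card = (edgeFin G (S.erase v)).card + degIn G S v := by
  set I : Finset (Sym2 V) := (S.filter (G.Adj v)).image (fun u => s(v, u)) with hI
  have hcardI : I.card = degIn G S v := by
    rw [hI, degIn_eq, Finset.card_image_of_injOn]
    intro a _ b _ hab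
    exact (Sym2.congr_right).mp hab
  have hvI : ∀ e ∈ I, v ∈ e := by
    intro e he
    rw [hI, Finset.mem_image] at he
    obtain ⟨u, _, rfl⟩ := he
    exact Sym2.mem_mk_left v u
  have hdisj : Disjoint (edgeFin G (S.erase v)) I := by
    rw [Finset.disjoint_left]
    intro e he heI
    rw [mem_edgeFin] at he
    exact Finset.notMem_erase v S (he.2 v (hvI e heI))
  have hunion : edgeFin G S = edgeFin G (S.erase v) ∪ I := by
    ext e
    constructor
    · intro he
      induction e using Sym2.ind with
      | _ a b =>
        rw [mem_edgeFin] at he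
        obtain ⟨hadj, hmem⟩ := he
        rw [SimpleGraph.mem_edgeSet] at hadj
        have ha : a ∈ S := hmem a (Sym2.mem_mk_left a b)
        have hb : b ∈ S := hmem b (Sym2.mem_mk_right a b)
        rw [Finset.mem_union]
        by_cases hav : a = v
        · subst hav
          right
          rw [hI, Finset.mem_image]
          exact ⟨b, Finset.mem_filter.mpr ⟨hb, hadj⟩, rfl⟩
        · by_cases hbv : b = v
          · subst hbv
            right
            rw [hI, Finset.mem_image]
            exact ⟨a, Finset.mem_filter.mpr ⟨ha, hadj.symm⟩, Sym2.eq_swap⟩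
          · left
            rw [mem_edgeFin]
            refine ⟨hadj, ?_⟩
            intro w hw
            rcases Sym2.mem_iff.mp hw with rfl | rfl
            · exact Finset.mem_erase.mpr ⟨hav, ha⟩
            · exact Finset.mem_erase.mpr ⟨hbv, hb⟩
    · intro he
      rw [Finset.mem_union] at he
      rcases he with he | he
      · rw [mem_edgeFin] at he ⊢
        exact ⟨he.1, fun w hw => Finset.mem_of_mem_erase (he.2 w hw)⟩
      · rw [hI, Finset.mem_image] at he
        obtain ⟨u, hu, rfl⟩ := he
        rw [Finset.mem_filter] at hu
        rw [mem_edgeFin]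
        refine ⟨hu.2, ?_⟩
        intro w hw
        rcases Sym2.mem_iff.mp hw with rfl | rfl
        · exact hv
        · exact hu.1
  rw [hunion, Finset.card_union_of_disjoint hdisj, hcardI]

lemma degIn_erase (S : Finset V) (v : V) :
    degIn G (S.erase v) v = degIn G S v := by
  rw [degIn_eq, degIn_eq]
  congr 1
  ext u
  simp only [Finset.mem_filter, Finset.mem_erase]
  constructor
  · rintro ⟨⟨_, hu⟩, h⟩; exact ⟨hu, h⟩
  · rintro ⟨hu, h⟩; exact ⟨⟨fun h' => G.irrefl (h' ▸ h), hu⟩, h⟩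

lemma handshake (S : Finset V) :
    ∑ u ∈ S, degIn G S u = 2 * (edgeFin G S).card := by
  induction S using Finset.strongInduction with
  | _ S ih =>
    rcases S.eq_empty_or_nonempty with rfl | ⟨v, hv⟩
    · simp [edgeFin]
    · set S' := S.erase v with hS'
      have hss : S' ⊂ S := Finset.erase_ssubset hv
      have hA : degIn G S' v = degIn G S v := degIn_erase G S v
      have hB : ∀ u ∈ S', degIn G S u = degIn G S' u + (if G.Adj u v then 1 else 0) := by
        intro u hu
        have huv : u ≠ v := (Finset.mem_erase.mp hu).1
        rw [degIn_eq, degIn_eq]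
        have hins : S = insert v S' := (Finset.insert_erase hv).symm
        rw [hins, Finset.filter_insert]
        by_cases h : G.Adj u v
        · rw [if_pos h, if_pos h, Finset.card_insert_of_notMem]
          intro hmem
          exact Finset.notMem_erase v S (Finset.mem_filter.mp hmem).1
        · rw [if_neg h, if_neg h, add_zero]
      have hsum : ∑ u ∈ S, degIn G S u
          = degIn G S v + ∑ u ∈ S', degIn G S u := (Finset.add_sum_erase S _ hv).symm
      have hsum2 : ∑ u ∈ S', degIn G S u
          = ∑ u ∈ S', degIn G S' u + ∑ u ∈ S', (if G.Adj u v then 1 else 0) := by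
        rw [← Finset.sum_add_distrib]
        exact Finset.sum_congr rfl hB
      have hsum3 : ∑ u ∈ S', (if G.Adj u v then 1 else 0) = degIn G S v := by
        rw [← Finset.card_filter]
        rw [← hA, degIn_eq]
        congr 1
        ext u
        simp only [Finset.mem_filter]
        exact and_congr_right (fun _ => ⟨fun h => h.symm, fun h => h.symm⟩)
      rw [hsum, hsum2, hsum3, ih S' hss, edgeFin_card_erase G hv]
      ring

end aux2

lemma peel_bound [DecidableEq V] (G : SimpleGraph V) [DecidableRel G.Adj]
    (c : V → ℝ) (θ z2 ℓ : ℝ)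
    (hpeel : ∀ S : Finset V, S.Nonempty →
      ∃ v ∈ S, (degIn G S v : ℝ) + z2 * (c v - θ) ≤ ℓ) :
    ∀ S : Finset V, ((edgeFin G S).card : ℝ) + z2 * ∑ v ∈ S, (c v - θ) ≤ ℓ * S.card := by
  intro S
  induction S using Finset.strongInduction with
  | _ S ih =>
    rcases S.eq_empty_or_nonempty with rfl | hS
    · simp [edgeFin]
    · obtain ⟨v, hv, hle⟩ := hpeel S hS
      have hE : ((edgeFin G S).card : ℝ)
          = (edgeFin G (S.erase v)).card + degIn G S v := by
        exact_mod_cast edgeFin_card_erase G hv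
      have hsum : ∑ u ∈ S, (c u - θ) = (c v - θ) + ∑ u ∈ S.erase v, (c u - θ) :=
        (Finset.add_sum_erase S _ hv).symm
      have hcard : ((S.erase v).card : ℝ) + 1 = S.card := by
        exact_mod_cast Finset.card_erase_add_one hv
      have hih := ih (S.erase v) (Finset.erase_ssubset hv)
      rw [hE, hsum, ← hcard]
      have : ℓ * (((S.erase v).card : ℝ) + 1) = ℓ * (S.erase v).card + ℓ := by ring
      rw [this]
      linarith


/-- Proposition 5 (combinatorial form): if every node of the nonempty subset `T` has load at
least `ℓ` and every nonempty subset contains a node of load at most `ℓ`, then for every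
nonempty feasible subset `S`, `d(T) ≥ d(S)/2 - (z₂/2)(c(T) - θ)`. -/
theorem qPeeling_aposteriori {V : Type*} [Fintype V]
    (G : SimpleGraph V) (c : V → ℝ) (θ : ℝ) (z2 ℓ : ℝ) (hz2 : 0 ≤ z2)
    (T : Finset V) (hT : T.Nonempty)
    (hload : ∀ v ∈ T, ℓ ≤ (degIn G T v : ℝ) + z2 * (c v - θ))
    (hpeel : ∀ S : Finset V, S.Nonempty →
      ∃ v ∈ S, (degIn G S v : ℝ) + z2 * (c v - θ) ≤ ℓ) :
    ∀ S : Finset V, S.Nonempty → θ ≤ agreement c S →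
      density G S / 2 - z2 / 2 * (agreement c T - θ) ≤ density G T := by
  classical
  intro S hS hfeas
  have hnS : (0 : ℝ) < S.card := by exact_mod_cast Finset.card_pos.mpr hS
  have hnT : (0 : ℝ) < T.card := by exact_mod_cast Finset.card_pos.mpr hT
  -- general facts
  have hsum_eq : ∀ U : Finset V, U.Nonempty →
      ∑ v ∈ U, (c v - θ) = (agreement c U - θ) * U.card := by
    intro U hU
    have hnU : ((U.card : ℝ)) ≠ 0 := by
      exact_mod_cast Finset.card_pos.mpr hU |>.ne'
    rw [Finset.sum_sub_distrib, Finset.sum_const, agreement, sub_mul,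
      div_mul_cancel₀ _ hnU]
    simp only [nsmul_eq_mul]
    ring
  have hden_eq : ∀ U : Finset V, U.Nonempty →
      ((edgeFin G U).card : ℝ) = density G U * U.card := by
    intro U hU
    have hnU : ((U.card : ℝ)) ≠ 0 := by
      exact_mod_cast Finset.card_pos.mpr hU |>.ne'
    rw [density_eq, div_mul_cancel₀ _ hnU]
  -- S side: density G S ≤ ℓ
  have hpS := peel_bound G c θ z2 ℓ hpeel S
  rw [hsum_eq S hS, hden_eq S hS] at hpS
  have hdS : density G S ≤ ℓ := by
    have h1 : (density G S + z2 * (agreement c S - θ)) * (S.card : ℝ) ≤ ℓ * S.card := by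
      ring_nf
      ring_nf at hpS
      linarith
    have h2 : density G S + z2 * (agreement c S - θ) ≤ ℓ :=
      le_of_mul_le_mul_right (by linarith [h1]) hnS
    nlinarith [mul_nonneg hz2 (sub_nonneg.mpr hfeas)]
  -- T side: ℓ ≤ 2 * density G T + z2 * (agreement c T - θ)
  have hsumT : (T.card : ℝ) • ℓ ≤ ∑ v ∈ T, ((degIn G T v : ℝ) + z2 * (c v - θ)) := by
    have := Finset.card_nsmul_le_sum T (fun v => (degIn G T v : ℝ) + z2 * (c v - θ)) ℓ hload
    simpa using this
  have hdegsum : ∑ v ∈ T, ((degIn G T v : ℝ)) = 2 * (edgeFin G T).card := by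
    rw [← Nat.cast_sum]
    exact_mod_cast handshake G T
  have hT2 : (T.card : ℝ) * ℓ ≤ 2 * (density G T * T.card)
      + z2 * ((agreement c T - θ) * T.card) := by
    rw [smul_eq_mul] at hsumT
    rw [Finset.sum_add_distrib, hdegsum, ← Finset.mul_sum, hsum_eq T hT,
      hden_eq T hT] at hsumT
    exact hsumT
  have hlT : ℓ ≤ 2 * density G T + z2 * (agreement c T - θ) := by
    have h3 : ℓ * (T.card : ℝ)
        ≤ (2 * density G T + z2 * (agreement c T - θ)) * T.card := by
      ring_nf
      ring_nf at hT2
      linarith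
    exact le_of_mul_le_mul_right h3 hnT
  linarith
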